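/- Let (S,d) be a metric space, A a nonempty finite set, C, K, L' ≥ 0 with R(·,a) C-Lipschitz for each a and transition maps F_a K-Lipschitz, let S† be a nonempty finite subset of S, V̂_next : S† → ℝ arbitrary, and define V̂(s) = max_{a∈A} { R(s,a) + min_{s† ∈ S†} [ V̂_next(s†) + L'·d(s†, F_a(s)) ] }. Then V̂ is Lipschitz continuous with constant C + L'·K. -/

import Mathlib

lemma sup'_abs_diff_le {A : Type*} (t : Finset A) (ht : t.Nonempty)
    (f g : A → ℝ) (c : ℝ) (h : ∀ a ∈ t, |f a - g a| ≤ c) :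
    |t.sup' ht f - t.sup' ht g| ≤ c := by
  rw [abs_sub_le_iff]
  constructor
  · rw [sub_le_iff_le_add]
    apply Finset.sup'_le
    intro a ha
    calc f a ≤ g a + c := by have := (abs_sub_le_iff.mp (h a ha)).1; linarith
    _ ≤ t.sup' ht g + c := by gcongr; exact Finset.le_sup' g ha
    _ = c + t.sup' ht g := by ring
  · rw [sub_le_iff_le_add]
    apply Finset.sup'_le
    intro a ha
    calc g a ≤ f a + c := by have := (abs_sub_le_iff.mp (h a ha)).2; linarith
    _ ≤ t.sup' ht f + c := by gcongr; exact Finset.le_sup' f ha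
    _ = c + t.sup' ht f := by ring

lemma inf'_abs_diff_le {A : Type*} (t : Finset A) (ht : t.Nonempty)
    (f g : A → ℝ) (c : ℝ) (h : ∀ a ∈ t, |f a - g a| ≤ c) :
    |t.inf' ht f - t.inf' ht g| ≤ c := by
  rw [abs_sub_le_iff]
  constructor
  · rw [sub_le_iff_le_add]
    obtain ⟨a, ha, hga⟩ := t.exists_mem_eq_inf' ht g
    rw [hga]
    calc t.inf' ht f ≤ f a := Finset.inf'_le f ha
    _ ≤ g a + c := by have := (abs_sub_le_iff.mp (h a ha)).1; linarith
    _ = c + g a := by ring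
  · rw [sub_le_iff_le_add]
    obtain ⟨a, ha, hfa⟩ := t.exists_mem_eq_inf' ht f
    rw [hfa]
    calc t.inf' ht g ≤ g a := Finset.inf'_le g ha
    _ ≤ f a + c := by have := (abs_sub_le_iff.mp (h a ha)).2; linarith
    _ = c + f a := by ring

theorem stmt_8 {S : Type*} [MetricSpace S] {A : Type*} [Fintype A] [Nonempty A]
    (Sd : Finset S) (hSd : Sd.Nonempty)
    (C K L' : ℝ) (hC : 0 ≤ C) (hK : 0 ≤ K) (hL' : 0 ≤ L')
    (R : S → A → ℝ) (F : A → S → S) (Vnext : S → ℝ) (Vhat : S → ℝ)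
    (hR : ∀ a : A, ∀ s s' : S, |R s a - R s' a| ≤ C * dist s s')
    (hF : ∀ a : A, ∀ s s' : S, dist (F a s) (F a s') ≤ K * dist s s')
    (hVhat : ∀ s : S, Vhat s = Finset.univ.sup' Finset.univ_nonempty
      (fun a : A => R s a + Sd.inf' hSd (fun sd => Vnext sd + L' * dist sd (F a s)))) :
    ∀ s s' : S, |Vhat s - Vhat s'| ≤ (C + L' * K) * dist s s' := by
  intro s s'
  rw [hVhat s, hVhat s']
  apply sup'_abs_diff_le
  intro a _
  have hinf : |Sd.inf' hSd (fun sd => Vnext sd + L' * dist sd (F a s)) -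
      Sd.inf' hSd (fun sd => Vnext sd + L' * dist sd (F a s'))| ≤ L' * K * dist s s' := by
    apply inf'_abs_diff_le
    intro sd _
    have h1 : |dist sd (F a s) - dist sd (F a s')| ≤ dist (F a s) (F a s') := by
      rw [dist_comm sd (F a s), dist_comm sd (F a s')]; exact abs_dist_sub_le _ _ _
    have h2 := hF a s s'
    calc |Vnext sd + L' * dist sd (F a s) - (Vnext sd + L' * dist sd (F a s'))|
        = L' * |dist sd (F a s) - dist sd (F a s')| := by
          rw [show Vnext sd + L' * dist sd (F a s) - (Vnext sd + L' * dist sd (F a s')) =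
            L' * (dist sd (F a s) - dist sd (F a s')) from by ring, abs_mul, abs_of_nonneg hL']
      _ ≤ L' * (K * dist s s') := by
          apply mul_le_mul_of_nonneg_left _ hL'; linarith
      _ = L' * K * dist s s' := by ring
  have hr := hR a s s'
  calc |R s a + Sd.inf' hSd (fun sd => Vnext sd + L' * dist sd (F a s)) -
      (R s' a + Sd.inf' hSd (fun sd => Vnext sd + L' * dist sd (F a s')))|
      ≤ |R s a - R s' a| + |Sd.inf' hSd (fun sd => Vnext sd + L' * dist sd (F a s)) -
        Sd.inf' hSd (fun sd => Vnext sd + L' * dist sd (F a s'))| := by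
        have := abs_add_le (R s a - R s' a) (Sd.inf' hSd (fun sd => Vnext sd + L' * dist sd (F a s)) -
          Sd.inf' hSd (fun sd => Vnext sd + L' * dist sd (F a s')))
        rw [show ∀ p q r t : ℝ, p + q - (r + t) = p - r + (q - t) from fun p q r t => by ring]; exact this
    _ ≤ C * dist s s' + L' * K * dist s s' := add_le_add hr hinf
    _ = (C + L' * K) * dist s s' := by ring
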